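/- Let M be an m²×n² complex matrix such that R_{m×n}(M) is symmetric and has rank one. Then there exists an m×n complex matrix A such that M = A ⊗ A. -/

import Mathlib

open Matrix Kronecker

/-- `vec A` is the vector of entries of the matrix `A`, indexed by pairs. -/
def vec {F : Type*} [Field F] {α β : Type*} (A : Matrix α β F) : α × β → F :=
  fun p => A p.1 p.2

/-- The rearrangement operator `R_{m×n}`:
`R M ((i,j),(k,l)) = M ((i,k),(j,l))`. -/
def R {F : Type*} [Field F] {m n : ℕ}
    (M : Matrix (Fin m × Fin m) (Fin n × Fin n) F) :
    Matrix (Fin m × Fin n) (Fin m × Fin n) F :=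
  fun p q => M (p.1, q.1) (p.2, q.2)

/-- The `j`-th rearrangement operator `R^{(j)}_{m×n}` on `m^k × n^k` matrices
(here with `k` replaced by `k+1` so that `k ≥ 1` automatically): the entry at
row `(a,b)` and column `(r,c)` is the entry of `M` at the tuples obtained from
`r` and `c` by inserting `a` resp. `b` at position `j`. -/
def Rj {F : Type*} [Field F] {m n k : ℕ} (j : Fin (k + 1))
    (M : Matrix (Fin (k + 1) → Fin m) (Fin (k + 1) → Fin n) F) :
    Matrix (Fin m × Fin n) ((Fin k → Fin m) × (Fin k → Fin n)) F :=
  fun p q => M (j.insertNth p.1 q.1) (j.insertNth p.2 q.2)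

/-- `R^Σ_{m×n} = Σ_j R^{(j)}_{m×n}`. -/
def RSigma {F : Type*} [Field F] {m n k : ℕ}
    (M : Matrix (Fin (k + 1) → Fin m) (Fin (k + 1) → Fin n) F) :
    Matrix (Fin m × Fin n) ((Fin k → Fin m) × (Fin k → Fin n)) F :=
  ∑ j : Fin (k + 1), Rj j M

/-- The `k`-th Kronecker power of an `m×n` matrix, indexed by tuples. -/
def kpow {F : Type*} [Field F] {m n : ℕ} (A : Matrix (Fin m) (Fin n) F) (k : ℕ) :
    Matrix (Fin k → Fin m) (Fin k → Fin n) F :=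
  fun r c => ∏ i, A (r i) (c i)

/-- The `k`-fold Kronecker product of a family of `m×n` matrices,
indexed by tuples. -/
def kprodFam {F : Type*} [Field F] {m n k : ℕ}
    (A : Fin k → Matrix (Fin m) (Fin n) F) :
    Matrix (Fin k → Fin m) (Fin k → Fin n) F :=
  fun r c => ∏ i, A i (r i) (c i)

/-- If `R_{m×n}(M)` is symmetric of rank one for a complex
matrix `M`, then `M` has a Kronecker square root. -/
private -- rank-one symmetric factorization
theorem rank1_symm {ι : Type*} [Fintype ι] [DecidableEq ι]
    (N : Matrix ι ι ℂ) (hsymm : N.IsSymm) (hrank : N.rank = 1) :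
    ∃ v : ι → ℂ, N = fun p q => v p * v q := by
  have h1 : Module.finrank ℂ (Submodule.span ℂ (Set.range Nᵀ)) = 1 := by
    have h := Matrix.rank_eq_finrank_span_cols N; rw [hrank] at h; exact h.symm
  obtain ⟨v, hv0, hv⟩ := finrank_eq_one_iff'.mp h1
  -- u : ι → ℂ
  set u : ι → ℂ := (v : ι → ℂ) with hu
  have hcol : ∀ q, ∃ c : ℂ, ∀ p, N p q = c * u p := by
    intro q
    have hmem : Nᵀ q ∈ Submodule.span ℂ (Set.range Nᵀ) :=
      Submodule.subset_span ⟨q, rfl⟩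
    obtain ⟨c, hc⟩ := hv ⟨Nᵀ q, hmem⟩
    refine ⟨c, fun p => ?_⟩
    have h2 : ((c • v : Submodule.span ℂ (Set.range Nᵀ)) : ι → ℂ) p = Nᵀ q p := by
      rw [hc]
    simpa [Matrix.transpose_apply, mul_comm] using h2.symm
  choose w hw using hcol
  have hNsym : ∀ p q, N p q = N q p := fun p q => by
    conv_lhs => rw [← hsymm]
    rfl
  have hufn : u ≠ 0 := fun h => hv0 (Subtype.ext h)
  obtain ⟨p₀, hp₀⟩ : ∃ p, u p ≠ 0 := by
    by_contra h; push_neg at h; exact hufn (funext h)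
  set c : ℂ := w p₀ / u p₀ with hc
  have hwq : ∀ q, w q = c * u q := by
    intro q
    have h := (hw q p₀).symm.trans ((hNsym p₀ q).trans (hw p₀ q))
    rw [hc, div_mul_eq_mul_div, eq_div_iff hp₀]
    linear_combination h
  have hN : ∀ p q, N p q = c * u p * u q := by
    intro p q; rw [hw q p, hwq q]; ring
  have hc0 : c ≠ 0 := by
    intro h
    have : N = 0 := by ext p q; simp [hN, h]
    rw [this, Matrix.rank_zero] at hrank; simp at hrank
  obtain ⟨s, hs⟩ := IsAlgClosed.exists_pow_nat_eq c (n := 2) (by norm_num)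
  refine ⟨fun p => s * u p, ?_⟩
  ext p q
  have : s ^ 2 = c := hs
  rw [hN p q, ← this]; ring

theorem stmt_2 {m n : ℕ}
    (M : Matrix (Fin m × Fin m) (Fin n × Fin n) ℂ)
    (hsymm : (R M).IsSymm) (hrank : (R M).rank = 1) :
    ∃ A : Matrix (Fin m) (Fin n) ℂ, M = A ⊗ₖ A := by
  obtain ⟨v, hv⟩ := rank1_symm (R M) hsymm hrank
  refine ⟨fun i j => v (i, j), ?_⟩
  ext ⟨i, k⟩ ⟨j, l⟩
  have : M (i, k) (j, l) = R M (i, j) (k, l) := rfl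
  rw [this, hv]
  simp [Matrix.kroneckerMap_apply]
  rfl
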